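/- There exists a family of instances on the real line showing sum-distortion does not control max-distortion: for n ≥ 2 agents at positions (k+1)t for t = 1,…,n and items at 1+(k+1)t for t = 1,…,n (with k > 1), the matching M sending a_t ↦ b_{t−1} for 2 ≤ t ≤ n and a_1 ↦ b_n has total cost (n−1)k + (n−1)(k+1) + 1 = n(2k+1) − 2k and maximum cost (n−1)k + n, while the identity matching a_t ↦ b_t has total cost n and maximum cost 1. Consequently, if the sum-distortion of M equals D = (2k+1) − 2k/n, its max-distortion equals n(D+1)/2. -/

import Mathlib

theorem stmt9 (n : ℕ) (k : ℝ) (hn : 2 ≤ n) (hk : 1 < k) :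
    let a : ℕ → ℝ := fun t => (k + 1) * t
    let b : ℕ → ℝ := fun t => 1 + (k + 1) * t
    let D : ℝ := (2 * k + 1) - 2 * k / n
    (∀ t ∈ Finset.Icc 1 n, |a t - b t| = 1) ∧
    (∀ t ∈ Finset.Icc 2 n, |a t - b (t - 1)| = k) ∧
    |a 1 - b n| = ((n : ℝ) - 1) * (k + 1) + 1 ∧
    |a 1 - b n| + ∑ t ∈ Finset.Icc 2 n, |a t - b (t - 1)| = n * (2 * k + 1) - 2 * k ∧
    (n : ℝ) * (2 * k + 1) - 2 * k = n * D ∧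
    |a 1 - b n| = ((n : ℝ) - 1) * k + n ∧
    ((n : ℝ) - 1) * k + n = n * (D + 1) / 2 ∧
    (∑ t ∈ Finset.Icc 1 n, |a t - b t| = n) := by
  intro a b D
  have hn2 : (2 : ℝ) ≤ (n : ℝ) := by exact_mod_cast hn
  have hn0 : (n : ℝ) ≠ 0 := by linarith
  have hk0 : (0 : ℝ) < k := by linarith
  have h1 : ∀ t ∈ Finset.Icc 1 n, |a t - b t| = 1 := by
    intro t ht
    have : a t - b t = -1 := by simp [a, b]
    rw [this]; simp
  have h2 : ∀ t ∈ Finset.Icc 2 n, |a t - b (t - 1)| = k := by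
    intro t ht
    rw [Finset.mem_Icc] at ht
    have h1t : 1 ≤ t := le_trans (by norm_num) ht.1
    have hc : ((t - 1 : ℕ) : ℝ) = (t : ℝ) - 1 := by
      push_cast [h1t]; ring
    have : a t - b (t - 1) = k := by simp only [a, b, hc]; ring
    rw [this, abs_of_pos hk0]
  have h3 : |a 1 - b n| = ((n : ℝ) - 1) * (k + 1) + 1 := by
    have : a 1 - b n = -((((n : ℝ)) - 1) * (k + 1) + 1) := by simp [a, b]; ring
    rw [this, abs_neg, abs_of_pos]
    nlinarith
  have hsum2 : ∑ t ∈ Finset.Icc 2 n, |a t - b (t - 1)| = ((n : ℝ) - 1) * k := by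
    rw [Finset.sum_congr rfl h2, Finset.sum_const, Nat.card_Icc]
    have : ((n + 1 - 2 : ℕ) : ℝ) = (n : ℝ) - 1 := by
      have : 2 ≤ n + 1 := by omega
      have h1n : 1 ≤ n := by omega
      push_cast [h1n]; ring
    rw [nsmul_eq_mul, this]
  refine ⟨h1, h2, h3, ?_, ?_, ?_, ?_, ?_⟩
  · rw [h3, hsum2]; ring
  · simp only [D]; field_simp
  · rw [h3]; ring
  · simp only [D]; field_simp; ring
  · rw [Finset.sum_congr rfl h1, Finset.sum_const, Nat.card_Icc]
    simp
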